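/- arXiv:1312.4727 — 3 statements merged into one kernel-verified Lean document; each statement's English description precedes it below -/
import Mathlib

section
/- For real numbers a < b and any natural number n, the integral ∫_a^b ((x-a)(b-x))^3 cos²(nx) dx equals (b-a)^7/280 + O(n^{-4}) as n → ∞; more precisely, the difference between the integral and (b-a)^7/280 is bounded by C/n^4 for some constant C depending only on a and b (for all n ≥ 1). -/
open Real MeasureTheory

set_option maxHeartbeats 2000000

private lemma hd6 (k0 k1 k2 k3 k4 k5 k6 x : ℝ) :
    HasDerivAt (fun x : ℝ => k0 + k1*x + k2*x^2 + k3*x^3 + k4*x^4 + k5*x^5 + k6*x^6)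
      (k1 + 2*k2*x + 3*k3*x^2 + 4*k4*x^3 + 5*k5*x^4 + 6*k6*x^5) x := by
  have h : HasDerivAt (fun x : ℝ => k0 + k1*x^1 + k2*x^2 + k3*x^3 + k4*x^4 + k5*x^5 + k6*x^6)
      (0 + k1*((1:ℕ)*x^0) + k2*((2:ℕ)*x^1) + k3*((3:ℕ)*x^2) + k4*((4:ℕ)*x^3)
        + k5*((5:ℕ)*x^4) + k6*((6:ℕ)*x^5)) x :=
    ((((((hasDerivAt_const x k0).add ((hasDerivAt_pow 1 x).const_mul k1)).add
      ((hasDerivAt_pow 2 x).const_mul k2)).add ((hasDerivAt_pow 3 x).const_mul k3)).add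
      ((hasDerivAt_pow 4 x).const_mul k4)).add ((hasDerivAt_pow 5 x).const_mul k5)).add
      ((hasDerivAt_pow 6 x).const_mul k6)
  have hfun : (fun x : ℝ => k0 + k1*x + k2*x^2 + k3*x^3 + k4*x^4 + k5*x^5 + k6*x^6)
      = (fun x : ℝ => k0 + k1*x^1 + k2*x^2 + k3*x^3 + k4*x^4 + k5*x^5 + k6*x^6) := by
    funext y; ring
  have hval : (k1 + 2*k2*x + 3*k3*x^2 + 4*k4*x^3 + 5*k5*x^4 + 6*k6*x^5)
      = (0 + k1*((1:ℕ)*x^0) + k2*((2:ℕ)*x^1) + k3*((3:ℕ)*x^2) + k4*((4:ℕ)*x^3)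
        + k5*((5:ℕ)*x^4) + k6*((6:ℕ)*x^5)) := by
    push_cast; ring
  rw [hfun, hval]; exact h

/-- S polynomial: c^6*P0 - c^4*P2 + c^2*P4 - P6 for P0 = ((x-a)(b-x))^3. -/
private noncomputable def Sf (a b c : ℝ) : ℝ → ℝ := fun x =>
  (720 - 72*b^2*c^2 - 216*a*b*c^2 + 6*a*b^3*c^4 - 72*a^2*c^2 + 18*a^2*b^2*c^4 + 6*a^3*b*c^4 - 1*a^3*b^3*c^6)
  + (360*b*c^2 - 6*b^3*c^4 + 360*a*c^2 - 54*a*b^2*c^4 - 54*a^2*b*c^4 + 3*a^2*b^3*c^6 - 6*a^3*c^4 + 3*a^3*b^2*c^6)*x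
  + (-360*c^2 + 36*b^2*c^4 + 108*a*b*c^4 - 3*a*b^3*c^6 + 36*a^2*c^4 - 9*a^2*b^2*c^6 - 3*a^3*b*c^6)*x^2
  + (-60*b*c^4 + 1*b^3*c^6 - 60*a*c^4 + 9*a*b^2*c^6 + 9*a^2*b*c^6 + 1*a^3*c^6)*x^3
  + (30*c^4 - 3*b^2*c^6 - 9*a*b*c^6 - 3*a^2*c^6)*x^4
  + (3*b*c^6 + 3*a*c^6)*x^5
  + (-1*c^6)*x^6

/-- T polynomial: c^5*P1 - c^3*P3 + c*P5. -/
private noncomputable def Tf (a b c : ℝ) : ℝ → ℝ := fun x =>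
  (360*b*c - 6*b^3*c^3 + 360*a*c - 54*a*b^2*c^3 - 54*a^2*b*c^3 + 3*a^2*b^3*c^5 - 6*a^3*c^3 + 3*a^3*b^2*c^5)
  + (-720*c + 72*b^2*c^3 + 216*a*b*c^3 - 6*a*b^3*c^5 + 72*a^2*c^3 - 18*a^2*b^2*c^5 - 6*a^3*b*c^5)*x
  + (-180*b*c^3 + 3*b^3*c^5 - 180*a*c^3 + 27*a*b^2*c^5 + 27*a^2*b*c^5 + 3*a^3*c^5)*x^2
  + (120*c^3 - 12*b^2*c^5 - 36*a*b*c^5 - 12*a^2*c^5)*x^3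
  + (15*b*c^5 + 15*a*c^5)*x^4
  + (-6*c^5)*x^5
  + (0:ℝ)*x^6

private lemma Sf_deriv (a b c x : ℝ) : HasDerivAt (Sf a b c) (c * Tf a b c x) x := by
  have h := hd6 (720 - 72*b^2*c^2 - 216*a*b*c^2 + 6*a*b^3*c^4 - 72*a^2*c^2 + 18*a^2*b^2*c^4 + 6*a^3*b*c^4 - 1*a^3*b^3*c^6)
    (360*b*c^2 - 6*b^3*c^4 + 360*a*c^2 - 54*a*b^2*c^4 - 54*a^2*b*c^4 + 3*a^2*b^3*c^6 - 6*a^3*c^4 + 3*a^3*b^2*c^6)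
    (-360*c^2 + 36*b^2*c^4 + 108*a*b*c^4 - 3*a*b^3*c^6 + 36*a^2*c^4 - 9*a^2*b^2*c^6 - 3*a^3*b*c^6)
    (-60*b*c^4 + 1*b^3*c^6 - 60*a*c^4 + 9*a*b^2*c^6 + 9*a^2*b*c^6 + 1*a^3*c^6)
    (30*c^4 - 3*b^2*c^6 - 9*a*b*c^6 - 3*a^2*c^6)
    (3*b*c^6 + 3*a*c^6)
    (-1*c^6) x
  have hval : c * Tf a b c x
      = ((360*b*c^2 - 6*b^3*c^4 + 360*a*c^2 - 54*a*b^2*c^4 - 54*a^2*b*c^4 + 3*a^2*b^3*c^6 - 6*a^3*c^4 + 3*a^3*b^2*c^6)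
        + 2*(-360*c^2 + 36*b^2*c^4 + 108*a*b*c^4 - 3*a*b^3*c^6 + 36*a^2*c^4 - 9*a^2*b^2*c^6 - 3*a^3*b*c^6)*x
        + 3*(-60*b*c^4 + 1*b^3*c^6 - 60*a*c^4 + 9*a*b^2*c^6 + 9*a^2*b*c^6 + 1*a^3*c^6)*x^2
        + 4*(30*c^4 - 3*b^2*c^6 - 9*a*b*c^6 - 3*a^2*c^6)*x^3
        + 5*(3*b*c^6 + 3*a*c^6)*x^4
        + 6*(-1*c^6)*x^5) := by
    unfold Tf; ring
  rw [hval]; exact h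

private lemma Tf_deriv (a b c x : ℝ) :
    HasDerivAt (Tf a b c) (c^7 * ((x-a)*(b-x))^3 - c * Sf a b c x) x := by
  have h := hd6 (360*b*c - 6*b^3*c^3 + 360*a*c - 54*a*b^2*c^3 - 54*a^2*b*c^3 + 3*a^2*b^3*c^5 - 6*a^3*c^3 + 3*a^3*b^2*c^5)
    (-720*c + 72*b^2*c^3 + 216*a*b*c^3 - 6*a*b^3*c^5 + 72*a^2*c^3 - 18*a^2*b^2*c^5 - 6*a^3*b*c^5)
    (-180*b*c^3 + 3*b^3*c^5 - 180*a*c^3 + 27*a*b^2*c^5 + 27*a^2*b*c^5 + 3*a^3*c^5)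
    (120*c^3 - 12*b^2*c^5 - 36*a*b*c^5 - 12*a^2*c^5)
    (15*b*c^5 + 15*a*c^5)
    (-6*c^5)
    ((0:ℝ)) x
  have hval : c^7 * ((x-a)*(b-x))^3 - c * Sf a b c x
      = ((-720*c + 72*b^2*c^3 + 216*a*b*c^3 - 6*a*b^3*c^5 + 72*a^2*c^3 - 18*a^2*b^2*c^5 - 6*a^3*b*c^5)
        + 2*(-180*b*c^3 + 3*b^3*c^5 - 180*a*c^3 + 27*a*b^2*c^5 + 27*a^2*b*c^5 + 3*a^3*c^5)*x
        + 3*(120*c^3 - 12*b^2*c^5 - 36*a*b*c^5 - 12*a^2*c^5)*x^2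
        + 4*(15*b*c^5 + 15*a*c^5)*x^3
        + 5*(-6*c^5)*x^4
        + 6*((0:ℝ))*x^5) := by
    unfold Sf; ring
  rw [hval]; exact h

private noncomputable def Ff (a b c : ℝ) : ℝ → ℝ := fun x =>
  (Real.sin (c*x) * Sf a b c x + Real.cos (c*x) * Tf a b c x) / c^7

private lemma Ff_deriv (a b c : ℝ) (hc : c ≠ 0) (x : ℝ) :
    HasDerivAt (Ff a b c) (((x-a)*(b-x))^3 * Real.cos (c*x)) x := by
  have hsin : HasDerivAt (fun x : ℝ => Real.sin (c*x)) (Real.cos (c*x) * (c*1)) x :=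
    (Real.hasDerivAt_sin (c*x)).comp x ((hasDerivAt_id x).const_mul c)
  have hcos : HasDerivAt (fun x : ℝ => Real.cos (c*x)) (-Real.sin (c*x) * (c*1)) x :=
    (Real.hasDerivAt_cos (c*x)).comp x ((hasDerivAt_id x).const_mul c)
  have hS := Sf_deriv a b c x
  have hT := Tf_deriv a b c x
  have h := ((hsin.mul hS).add (hcos.mul hT)).div_const (c^7)
  have hnum : Real.cos (c*x) * (c*1) * Sf a b c x + Real.sin (c*x) * (c * Tf a b c x)
        + (-Real.sin (c*x) * (c*1) * Tf a b c x
          + Real.cos (c*x) * (c^7 * ((x-a)*(b-x))^3 - c * Sf a b c x))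
      = (((x-a)*(b-x))^3 * Real.cos (c*x)) * c^7 := by ring
  rw [hnum, mul_div_cancel_right₀ _ (pow_ne_zero 7 hc)] at h
  exact h

private lemma osc (a b c : ℝ) (hab : a < b) (hc : 2 ≤ c) :
    |∫ x in a..b, ((x-a)*(b-x))^3 * Real.cos (c*x)|
      ≤ (12*(b-a)^3 + 144*(b-a)^2 + 720*(b-a) + 1440) / c^4 := by
  have hc0 : (0:ℝ) < c := by linarith
  have hcne : c ≠ 0 := ne_of_gt hc0
  have hL0 : (0:ℝ) < b - a := sub_pos.mpr hab
  have hcont : Continuous fun x : ℝ => ((x-a)*(b-x))^3 * Real.cos (c*x) := by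
    fun_prop
  have hint : (∫ x in a..b, ((x-a)*(b-x))^3 * Real.cos (c*x)) = Ff a b c b - Ff a b c a :=
    intervalIntegral.integral_eq_sub_of_hasDerivAt
      (fun x _ => Ff_deriv a b c hcne x) (hcont.intervalIntegrable a b)
  have eSa : Sf a b c a = 720 - 72*c^2*(b-a)^2 := by unfold Sf; ring
  have eSb : Sf a b c b = 720 - 72*c^2*(b-a)^2 := by unfold Sf; ring
  have eTa : Tf a b c a = 360*c*(b-a) - 6*c^3*(b-a)^3 := by unfold Tf; ring
  have eTb : Tf a b c b = 6*c^3*(b-a)^3 - 360*c*(b-a) := by unfold Tf; ring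
  rw [hint]
  unfold Ff
  rw [eSa, eSb, eTa, eTb]
  have hcomb : (Real.sin (c*b) * (720 - 72*c^2*(b-a)^2) + Real.cos (c*b) * (6*c^3*(b-a)^3 - 360*c*(b-a))) / c^7
      - (Real.sin (c*a) * (720 - 72*c^2*(b-a)^2) + Real.cos (c*a) * (360*c*(b-a) - 6*c^3*(b-a)^3)) / c^7
      = (Real.sin (c*b) * (720 - 72*c^2*(b-a)^2) + Real.cos (c*b) * (6*c^3*(b-a)^3 - 360*c*(b-a))
        - (Real.sin (c*a) * (720 - 72*c^2*(b-a)^2) + Real.cos (c*a) * (360*c*(b-a) - 6*c^3*(b-a)^3))) / c^7 := by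
    ring
  rw [hcomb, abs_div, abs_of_pos (pow_pos hc0 7),
    div_le_div_iff₀ (pow_pos hc0 7) (pow_pos hc0 4)]
  have hX : (0:ℝ) ≤ 72*c^2*(b-a)^2 := by positivity
  have hY : (0:ℝ) ≤ 6*c^3*(b-a)^3 := by positivity
  have hZ : (0:ℝ) ≤ 360*c*(b-a) := by positivity
  have hV1 : |720 - 72*c^2*(b-a)^2| ≤ 720 + 72*c^2*(b-a)^2 := by
    rw [abs_le]; constructor <;> linarith
  have hV2 : |6*c^3*(b-a)^3 - 360*c*(b-a)| ≤ 6*c^3*(b-a)^3 + 360*c*(b-a) := by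
    rw [abs_le]; constructor <;> linarith
  have hV3 : |360*c*(b-a) - 6*c^3*(b-a)^3| ≤ 6*c^3*(b-a)^3 + 360*c*(b-a) := by
    rw [abs_le]; constructor <;> linarith
  have habs : ∀ s v w : ℝ, |s| ≤ 1 → |v| ≤ w → |s * v| ≤ w := by
    intro s v w hs hv
    rw [abs_mul]
    calc |s| * |v| ≤ 1 * |v| := mul_le_mul_of_nonneg_right hs (abs_nonneg v)
    _ = |v| := one_mul _
    _ ≤ w := hv
  have m1 := habs _ _ _ (Real.abs_sin_le_one (c*b)) hV1
  have m2 := habs _ _ _ (Real.abs_cos_le_one (c*b)) hV2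
  have m3 := habs _ _ _ (Real.abs_sin_le_one (c*a)) hV1
  have m4 := habs _ _ _ (Real.abs_cos_le_one (c*a)) hV3
  have l1 := abs_le.mp m1
  have l2 := abs_le.mp m2
  have l3 := abs_le.mp m3
  have l4 := abs_le.mp m4
  have hEbound : |Real.sin (c*b) * (720 - 72*c^2*(b-a)^2) + Real.cos (c*b) * (6*c^3*(b-a)^3 - 360*c*(b-a))
        - (Real.sin (c*a) * (720 - 72*c^2*(b-a)^2) + Real.cos (c*a) * (360*c*(b-a) - 6*c^3*(b-a)^3))|
      ≤ 1440 + 144*c^2*(b-a)^2 + 12*c^3*(b-a)^3 + 720*c*(b-a) := by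
    rw [abs_le]
    constructor <;> linarith [l1.1, l1.2, l2.1, l2.2, l3.1, l3.2, l4.1, l4.2]
  have hc1 : (1:ℝ) ≤ c := by linarith
  have q1 : c^4 ≤ c^7 := pow_le_pow_right₀ hc1 (by norm_num)
  have q2 : c^6*(b-a)^2 ≤ c^7*(b-a)^2 :=
    mul_le_mul_of_nonneg_right (pow_le_pow_right₀ hc1 (by norm_num)) (by positivity)
  have q3 : c^5*(b-a) ≤ c^7*(b-a) :=
    mul_le_mul_of_nonneg_right (pow_le_pow_right₀ hc1 (by norm_num)) (le_of_lt hL0)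
  calc |Real.sin (c*b) * (720 - 72*c^2*(b-a)^2) + Real.cos (c*b) * (6*c^3*(b-a)^3 - 360*c*(b-a))
        - (Real.sin (c*a) * (720 - 72*c^2*(b-a)^2) + Real.cos (c*a) * (360*c*(b-a) - 6*c^3*(b-a)^3))| * c^4
      ≤ (1440 + 144*c^2*(b-a)^2 + 12*c^3*(b-a)^3 + 720*c*(b-a)) * c^4 :=
        mul_le_mul_of_nonneg_right hEbound (by positivity)
    _ ≤ (12*(b-a)^3 + 144*(b-a)^2 + 720*(b-a) + 1440) * c^7 := by nlinarith [q1, q2, q3]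

theorem stmt_0 (a b : ℝ) (hab : a < b) :
    ∃ C : ℝ, ∀ n : ℕ, 1 ≤ n →
      |(∫ x in a..b, ((x - a) * (b - x))^3 * (Real.cos (n * x))^2) - (b - a)^7 / 280|
        ≤ C / (n : ℝ)^4 := by
  refine ⟨12*(b-a)^3 + 144*(b-a)^2 + 720*(b-a) + 1440, ?_⟩
  intro n hn
  have hn1 : (1:ℝ) ≤ (n:ℝ) := by exact_mod_cast hn
  have hn0 : (0:ℝ) < (n:ℝ) := by linarith
  have hL0 : (0:ℝ) < b - a := sub_pos.mpr hab
  set c : ℝ := 2*(n:ℝ) with hcdef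
  have hc2 : (2:ℝ) ≤ c := by rw [hcdef]; linarith
  -- antiderivative for the main term
  have hG : ∀ x ∈ Set.uIcc a b, HasDerivAt (fun x : ℝ =>
      (b-a)^3*(x-a)^4/4 - 3*(b-a)^2*(x-a)^5/5 + (b-a)*(x-a)^6/2 - (x-a)^7/7)
      (((x-a)*(b-x))^3) x := by
    intro x _
    have h1 : HasDerivAt (fun x : ℝ => x - a) 1 x := (hasDerivAt_id x).sub_const a
    have h4 := ((h1.pow 4).const_mul ((b-a)^3)).div_const 4
    have h5 := ((h1.pow 5).const_mul (3*(b-a)^2)).div_const 5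
    have h6 := ((h1.pow 6).const_mul (b-a)).div_const 2
    have h7 := (h1.pow 7).div_const 7
    have h := ((h4.sub h5).add h6).sub h7
    refine h.congr_deriv ?_
    push_cast
    ring
  have hP0cont : Continuous fun x : ℝ => ((x-a)*(b-x))^3 := by fun_prop
  have h140 : (∫ x in a..b, ((x-a)*(b-x))^3) = (b-a)^7/140 := by
    rw [intervalIntegral.integral_eq_sub_of_hasDerivAt hG (hP0cont.intervalIntegrable a b)]
    ring
  -- split the integral
  have i1 : IntervalIntegrable (fun x : ℝ => ((x-a)*(b-x))^3 / 2) volume a b :=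
    (by fun_prop : Continuous fun x : ℝ => ((x-a)*(b-x))^3 / 2).intervalIntegrable a b
  have i2 : IntervalIntegrable (fun x : ℝ => ((x-a)*(b-x))^3 * Real.cos (c*x) / 2) volume a b :=
    (by fun_prop : Continuous fun x : ℝ => ((x-a)*(b-x))^3 * Real.cos (c*x) / 2).intervalIntegrable a b
  have hsplit : (∫ x in a..b, ((x - a) * (b - x))^3 * (Real.cos ((n:ℝ) * x))^2)
      = (∫ x in a..b, ((x-a)*(b-x))^3)/2
        + (∫ x in a..b, ((x-a)*(b-x))^3 * Real.cos (c*x))/2 := by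
    rw [← intervalIntegral.integral_div, ← intervalIntegral.integral_div,
      ← intervalIntegral.integral_add i1 i2]
    apply intervalIntegral.integral_congr
    intro x _
    have harg : 2*((n:ℝ)*x) = c*x := by rw [hcdef]; ring
    simp only [Real.cos_sq, harg]
    ring
  have hosc := osc a b c hab hc2
  have key : |(∫ x in a..b, ((x - a) * (b - x))^3 * (Real.cos ((n:ℝ) * x))^2) - (b - a)^7 / 280|
      ≤ (12*(b-a)^3 + 144*(b-a)^2 + 720*(b-a) + 1440) / c^4 / 2 := by
    rw [hsplit, h140]
    have : (b-a)^7/140/2 + (∫ x in a..b, ((x-a)*(b-x))^3 * Real.cos (c*x))/2 - (b-a)^7/280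
        = (∫ x in a..b, ((x-a)*(b-x))^3 * Real.cos (c*x))/2 := by ring
    rw [this, abs_div, abs_of_pos (by norm_num : (0:ℝ) < 2)]
    linarith [hosc]
  refine key.trans ?_
  have hM : (0:ℝ) ≤ 12*(b-a)^3 + 144*(b-a)^2 + 720*(b-a) + 1440 := by positivity
  have hden : (n:ℝ)^4 ≤ c^4 * 2 := by
    rw [hcdef]
    nlinarith [pow_pos hn0 4]
  rw [div_div]
  gcongr
end

section
/- Let a1 < a2 < a3 < a4 be real numbers. Define K₋' = ∫_{a1}^{a2} dx/√(-P(x)) and K₋'' = ∫_{a3}^{a4} dx/√(-P(x)), where P(x) = ∏_{j=1}^4 (x-a_j). Then K₋' = K₋'' (both integrals converge and are equal). -/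
set_option maxHeartbeats 1000000

open Real MeasureTheory intervalIntegral Set Filter Topology

lemma aux_left (a b : ℝ) (hab : a < b) (F : ℝ → ℝ) (hF : Continuous F)
    (hFpos : ∀ x ∈ Set.Icc a b, 0 < F x) :
    IntervalIntegrable (fun x => 1 / Real.sqrt ((x - a) * F x)) volume a b := by
  obtain ⟨x₀, hx₀, hmin⟩ := isCompact_Icc.exists_isMinOn ⟨a, left_mem_Icc.2 hab.le⟩
    hF.continuousOn
  set m := F x₀ with hm
  have hmpos : 0 < m := hFpos x₀ hx₀
  have hdom : IntervalIntegrable (fun x => (Real.sqrt m)⁻¹ * ((x - a) ^ (-(1/2) : ℝ)))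
      volume a b := by
    have h1 : IntervalIntegrable (fun x : ℝ => x ^ (-(1/2) : ℝ)) volume 0 (b - a) :=
      intervalIntegral.intervalIntegrable_rpow' (by norm_num)
    have h2 := (h1.comp_sub_right a).const_mul (Real.sqrt m)⁻¹
    simpa using h2
  apply hdom.mono_fun
  · apply Measurable.aestronglyMeasurable
    have : Measurable fun x => Real.sqrt ((x - a) * F x) :=
      (Real.continuous_sqrt.comp (((continuous_id.sub continuous_const).mul hF))).measurable
    exact measurable_const.div this
  · filter_upwards [ae_restrict_mem measurableSet_uIoc] with x hx
    rw [Set.uIoc_of_le hab.le] at hx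
    have hxa : 0 < x - a := sub_pos.2 hx.1
    have hmF : m ≤ F x := hmin ⟨hx.1.le, hx.2⟩
    have h1 : Real.sqrt ((x - a) * m) ≤ Real.sqrt ((x - a) * F x) :=
      Real.sqrt_le_sqrt (by nlinarith)
    have h2 : 0 < Real.sqrt ((x - a) * m) := Real.sqrt_pos.2 (by positivity)
    have hrw : (x - a) ^ (-(1/2) : ℝ) = (Real.sqrt (x - a))⁻¹ := by
      rw [Real.rpow_neg hxa.le, Real.sqrt_eq_rpow]
    have key : 1 / Real.sqrt ((x - a) * F x) ≤ (Real.sqrt m)⁻¹ * ((x - a) ^ (-(1/2) : ℝ)) := by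
      rw [hrw, one_div,
        show (Real.sqrt m)⁻¹ * (Real.sqrt (x - a))⁻¹ = (Real.sqrt ((x - a) * m))⁻¹ by
          rw [Real.sqrt_mul hxa.le, mul_inv, mul_comm]]
      exact inv_anti₀ h2 h1
    have hnn : 0 ≤ (Real.sqrt m)⁻¹ * ((x - a) ^ (-(1/2) : ℝ)) := by positivity
    calc ‖1 / Real.sqrt ((x - a) * F x)‖ = 1 / Real.sqrt ((x - a) * F x) := by
          rw [Real.norm_eq_abs, abs_of_nonneg (by positivity)]
      _ ≤ (Real.sqrt m)⁻¹ * ((x - a) ^ (-(1/2) : ℝ)) := key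
      _ = ‖(Real.sqrt m)⁻¹ * ((x - a) ^ (-(1/2) : ℝ))‖ := by
          rw [Real.norm_eq_abs, abs_of_nonneg hnn]

lemma aux_right (a b : ℝ) (hab : a < b) (F : ℝ → ℝ) (hF : Continuous F)
    (hFpos : ∀ x ∈ Set.Icc a b, 0 < F x) :
    IntervalIntegrable (fun x => 1 / Real.sqrt ((b - x) * F x)) volume a b := by
  have h := (aux_left a b hab (fun y => F (a + b - y))
      (hF.comp (by continuity))
      (fun x hx => hFpos _ ⟨by linarith [hx.2], by linarith [hx.1]⟩)).comp_sub_left (a + b)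
  have he : (fun x => (fun y => 1 / Real.sqrt ((y - a) * F (a + b - y))) (a + b - x))
      = fun x => 1 / Real.sqrt ((b - x) * F x) := by
    funext x
    have h1 : a + b - x - a = b - x := by ring
    have h2 : a + b - (a + b - x) = x := by ring
    simp only [h1, h2]
  rw [he] at h
  have e1 : a + b - a = b := by ring
  have e2 : a + b - b = a := by ring
  rw [e1, e2] at h
  exact h.symm

theorem stmt_8 (a1 a2 a3 a4 : ℝ) (h12 : a1 < a2) (h23 : a2 < a3) (h34 : a3 < a4)
    (P : ℝ → ℝ) (hP : ∀ x, P x = (x - a1) * (x - a2) * (x - a3) * (x - a4)) :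
    IntervalIntegrable (fun x => 1 / Real.sqrt (-P x)) volume a1 a2 ∧
    IntervalIntegrable (fun x => 1 / Real.sqrt (-P x)) volume a3 a4 ∧
    (∫ x in a1..a2, 1 / Real.sqrt (-P x)) = ∫ x in a3..a4, 1 / Real.sqrt (-P x) := by
  have hPc : Continuous P := by
    have hPe : P = fun x => (x - a1) * (x - a2) * (x - a3) * (x - a4) := funext hP
    rw [hPe]; fun_prop
  set f : ℝ → ℝ := fun x => 1 / Real.sqrt (-P x) with hfdef
  -- Integrability on [a1, a2]
  have I1 : IntervalIntegrable f volume a1 a2 := by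
    have hL : IntervalIntegrable f volume a1 ((a1 + a2) / 2) := by
      have hrepr : f = fun x => 1 / Real.sqrt ((x - a1) * ((a2 - x) * ((a3 - x) * (a4 - x)))) := by
        funext x
        have : -P x = (x - a1) * ((a2 - x) * ((a3 - x) * (a4 - x))) := by rw [hP]; ring
        rw [hfdef]; simp only [this]
      rw [hrepr]
      exact aux_left a1 ((a1 + a2) / 2) (by linarith) _ (by fun_prop)
        (fun x hx => by
          obtain ⟨hx1, hx2⟩ := hx
          exact mul_pos (by linarith) (mul_pos (by linarith) (by linarith)))
    have hR : IntervalIntegrable f volume ((a1 + a2) / 2) a2 := by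
      have hrepr : f = fun x => 1 / Real.sqrt ((a2 - x) * ((x - a1) * ((a3 - x) * (a4 - x)))) := by
        funext x
        have : -P x = (a2 - x) * ((x - a1) * ((a3 - x) * (a4 - x))) := by rw [hP]; ring
        rw [hfdef]; simp only [this]
      rw [hrepr]
      exact aux_right ((a1 + a2) / 2) a2 (by linarith) _ (by fun_prop)
        (fun x hx => by
          obtain ⟨hx1, hx2⟩ := hx
          exact mul_pos (by linarith) (mul_pos (by linarith) (by linarith)))
    exact hL.trans hR
  -- Integrability on [a3, a4]
  have I2 : IntervalIntegrable f volume a3 a4 := by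
    have hL : IntervalIntegrable f volume a3 ((a3 + a4) / 2) := by
      have hrepr : f = fun x => 1 / Real.sqrt ((x - a3) * ((x - a1) * ((x - a2) * (a4 - x)))) := by
        funext x
        have : -P x = (x - a3) * ((x - a1) * ((x - a2) * (a4 - x))) := by rw [hP]; ring
        rw [hfdef]; simp only [this]
      rw [hrepr]
      exact aux_left a3 ((a3 + a4) / 2) (by linarith) _ (by fun_prop)
        (fun x hx => by
          obtain ⟨hx1, hx2⟩ := hx
          exact mul_pos (by linarith) (mul_pos (by linarith) (by linarith)))
    have hR : IntervalIntegrable f volume ((a3 + a4) / 2) a4 := by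
      have hrepr : f = fun x => 1 / Real.sqrt ((a4 - x) * ((x - a1) * ((x - a2) * (x - a3)))) := by
        funext x
        have : -P x = (a4 - x) * ((x - a1) * ((x - a2) * (x - a3))) := by rw [hP]; ring
        rw [hfdef]; simp only [this]
      rw [hrepr]
      exact aux_right ((a3 + a4) / 2) a4 (by linarith) _ (by fun_prop)
        (fun x hx => by
          obtain ⟨hx1, hx2⟩ := hx
          exact mul_pos (by linarith) (mul_pos (by linarith) (by linarith)))
    exact hL.trans hR
  refine ⟨I1, I2, ?_⟩
  -- Möbius transformation setup
  obtain ⟨D, hD⟩ : ∃ D : ℝ, D = a2 + a4 - a1 - a3 := ⟨_, rfl⟩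
  have hDpos : 0 < D := by rw [hD]; linarith
  obtain ⟨p, hp⟩ : ∃ p : ℝ, p = (a2 * a4 - a1 * a3) / D := ⟨_, rfl⟩
  obtain ⟨q, hq⟩ : ∃ q : ℝ, q = a1 * a3 - p * (a1 + a3) := ⟨_, rfl⟩
  obtain ⟨c, hc⟩ : ∃ c : ℝ, c = (p - a1) * (a3 - p) := ⟨_, rfl⟩
  have hq2 : q = a2 * a4 - p * (a2 + a4) := by
    rw [hq, hp]; field_simp
    linear_combination (a1 * a3 - a2 * a4) * hD
  have hpa2 : a2 < p := by
    have h' : p - a2 = (a2 - a1) * (a3 - a2) / D := by rw [hp, hD]; rw [div_sub' (by rw [hD] at hDpos; exact hDpos.ne'), div_eq_div_iff (by rw [hD] at hDpos; exact hDpos.ne') (by rw [hD] at hDpos; exact hDpos.ne')]; ring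
    have h'' : 0 < (a2 - a1) * (a3 - a2) / D :=
      div_pos (mul_pos (by linarith) (by linarith)) hDpos
    linarith [h' ▸ h'']
  have hpa3 : p < a3 := by
    have h' : a3 - p = (a4 - a3) * (a3 - a2) / D := by rw [hp, hD]; rw [sub_div' (by rw [hD] at hDpos; exact hDpos.ne'), div_eq_div_iff (by rw [hD] at hDpos; exact hDpos.ne') (by rw [hD] at hDpos; exact hDpos.ne')]; ring
    have h'' : 0 < (a4 - a3) * (a3 - a2) / D :=
      div_pos (mul_pos (by linarith) (by linarith)) hDpos
    linarith [h' ▸ h'']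
  have hcpos : 0 < c := by rw [hc]; exact mul_pos (by linarith) (by linarith)
  have hc2 : (p - a1) * (a3 - p) = (p - a2) * (a4 - p) := by
    have h0 : a1 * a3 - p * (a1 + a3) = a2 * a4 - p * (a2 + a4) := hq.symm.trans hq2
    linear_combination -h0
  obtain ⟨T, hT⟩ : ∃ T : ℝ → ℝ, T = fun x => (p * x + q) / (x - p) := ⟨_, rfl⟩
  have e1 : ∀ x, x ≠ p → T x - a1 = (p - a1) * (x - a3) / (x - p) := by
    intro x hx
    have hxp := sub_ne_zero.2 hx
    rw [hT]; simp only; rw [hq]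
    field_simp
    ring
  have e2 : ∀ x, x ≠ p → T x - a2 = (p - a2) * (x - a4) / (x - p) := by
    intro x hx
    have hxp := sub_ne_zero.2 hx
    rw [hT]; simp only; rw [hq2]
    field_simp
    ring
  have e3 : ∀ x, x ≠ p → T x - a3 = (p - a3) * (x - a1) / (x - p) := by
    intro x hx
    have hxp := sub_ne_zero.2 hx
    rw [hT]; simp only; rw [hq]
    field_simp
    ring
  have e4 : ∀ x, x ≠ p → T x - a4 = (p - a4) * (x - a2) / (x - p) := by
    intro x hx
    have hxp := sub_ne_zero.2 hx
    rw [hT]; simp only; rw [hq2]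
    field_simp
    ring
  have hnum1 : (p - a1) * (p - a3) = -c := by rw [hc]; ring
  have hpD : p * D = a2 * a4 - a1 * a3 := by rw [hp]; field_simp
  have hnum2 : (p - a2) * (p - a4) = -c := by
    rw [hc]; linear_combination -hpD + p * hD
  have hPT : ∀ x, x ≠ p → -P (T x) = (c / (x - p) ^ 2) ^ 2 * (-P x) := by
    intro x hx
    have hxp := sub_ne_zero.2 hx
    calc -P (T x)
        = -(((p - a1) * (x - a3) / (x - p)) * ((p - a2) * (x - a4) / (x - p)) *
            ((p - a3) * (x - a1) / (x - p)) * ((p - a4) * (x - a2) / (x - p))) := by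
          rw [hP (T x), e1 x hx, e2 x hx, e3 x hx, e4 x hx]
      _ = -(((p - a1) * (p - a3)) * ((p - a2) * (p - a4)) *
            ((x - a1) * (x - a2) * (x - a3) * (x - a4)) / (x - p) ^ 4) := by
          field_simp
      _ = (c / (x - p) ^ 2) ^ 2 * (-P x) := by
          rw [hnum1, hnum2, hP x]
          field_simp
  have hsqrt : ∀ x, x ≠ p → Real.sqrt (-P (T x)) = (c / (x - p) ^ 2) * Real.sqrt (-P x) := by
    intro x hx
    rw [hPT x hx, Real.sqrt_mul (sq_nonneg _), Real.sqrt_sq (div_nonneg hcpos.le (sq_nonneg _))]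
  have hTmem : ∀ x ∈ Set.Ioo a1 a2, T x ∈ Set.Ioo a3 a4 := by
    intro x hx
    have hxltp : x < p := lt_trans hx.2 hpa2
    have hxp : x ≠ p := ne_of_lt hxltp
    constructor
    · have h3 := e3 x hxp
      have hpos : 0 < T x - a3 := by
        rw [h3]
        exact div_pos_of_neg_of_neg
          (mul_neg_of_neg_of_pos (by linarith) (by linarith [hx.1])) (by linarith)
      linarith
    · have h4 := e4 x hxp
      have hneg : T x - a4 < 0 := by
        rw [h4]
        exact div_neg_of_pos_of_neg
          (mul_pos_of_neg_of_neg (by linarith) (by linarith [hx.2])) (by linarith)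
      linarith
  have hPpos12 : ∀ y ∈ Set.Ioo a1 a2, 0 < -P y := by
    intro y hy
    have he : -P y = (y - a1) * ((a2 - y) * ((a3 - y) * (a4 - y))) := by rw [hP]; ring
    rw [he]
    exact mul_pos (by linarith [hy.1])
      (mul_pos (by linarith [hy.2]) (mul_pos (by linarith [hy.2]) (by linarith [hy.2])))
  have hPpos34 : ∀ y ∈ Set.Ioo a3 a4, 0 < -P y := by
    intro y hy
    have he : -P y = (y - a1) * ((y - a2) * ((y - a3) * (a4 - y))) := by rw [hP]; ring
    rw [he]
    exact mul_pos (by linarith [hy.1])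
      (mul_pos (by linarith [hy.1]) (mul_pos (by linarith [hy.1]) (by linarith [hy.2])))
  have hfc : ∀ y : ℝ, 0 < -P y → ContinuousAt f y := by
    intro y hy
    have h1 : ContinuousAt (fun x => Real.sqrt (-P x)) y :=
      (Real.continuous_sqrt.comp hPc.neg).continuousAt
    have h2 : Real.sqrt (-P y) ≠ 0 := (Real.sqrt_pos.2 hy).ne'
    exact continuousAt_const.div h1 h2
  have hTderiv : ∀ x, x ≠ p → HasDerivAt T (c / (x - p) ^ 2) x := by
    intro x hx
    have hxp := sub_ne_zero.2 hx
    have h1 : HasDerivAt (fun y : ℝ => p * y + q) p x := by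
      simpa using ((hasDerivAt_id x).const_mul p).add_const q
    have h2 : HasDerivAt (fun y : ℝ => y - p) 1 x := (hasDerivAt_id x).sub_const p
    have h := h1.div h2 hxp
    rw [hT]; refine h.congr_deriv ?_
    rw [hc, hq]
    rw [div_left_inj' (pow_ne_zero 2 hxp)]
    ring
  have hTcontAt : ∀ x, x ≠ p → ContinuousAt T x := fun x hx =>
    (hTderiv x hx).continuousAt
  have hsubst : ∀ u v, a1 < u → u ≤ v → v < a2 →
      (∫ x in u..v, f x) = ∫ x in (T u)..(T v), f x := by
    intro u v hu huv hv
    have hsub : Set.uIcc u v ⊆ Set.Ioo a1 a2 := by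
      rw [Set.uIcc_of_le huv]
      intro x hx
      exact ⟨lt_of_lt_of_le hu hx.1, lt_of_le_of_lt hx.2 hv⟩
    have hne : ∀ x ∈ Set.uIcc u v, x ≠ p := fun x hx =>
      ne_of_lt (lt_trans (hsub hx).2 hpa2)
    have hder : ∀ x ∈ Set.uIcc u v, HasDerivAt T (c / (x - p) ^ 2) x := fun x hx =>
      hTderiv x (hne x hx)
    have hcont' : ContinuousOn (fun x => c / (x - p) ^ 2) (Set.uIcc u v) := by
      apply ContinuousOn.div continuousOn_const (by fun_prop)
      intro x hx
      exact pow_ne_zero 2 (sub_ne_zero.2 (hne x hx))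
    have hgcont : ContinuousOn f (T '' Set.uIcc u v) := by
      intro y hy
      obtain ⟨x, hx, rfl⟩ := hy
      exact (hfc _ (hPpos34 _ (hTmem x (hsub hx)))).continuousWithinAt
    have hcv := integral_comp_smul_deriv' hder hcont' hgcont
    rw [← hcv]
    apply intervalIntegral.integral_congr
    intro x hx
    have hxltp : x < p := lt_trans (hsub hx).2 hpa2
    have hxp : x ≠ p := ne_of_lt hxltp
    have hs := hsqrt x hxp
    have hPx : 0 < -P x := hPpos12 x (hsub hx)
    have hsq : 0 < Real.sqrt (-P x) := Real.sqrt_pos.2 hPx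
    have hxp2 : (0 : ℝ) < (x - p) ^ 2 := by nlinarith
    show f x = (c / (x - p) ^ 2) • (f ∘ T) x
    simp only [Function.comp_apply, smul_eq_mul, hfdef]
    rw [hs]
    field_simp
  -- primitives
  have hΦ : ContinuousOn (fun t => ∫ x in a1..t, f x) (Set.uIcc a1 a2) :=
    continuousOn_primitive_interval' I1 Set.left_mem_uIcc
  have hΨ : ContinuousOn (fun t => ∫ x in a3..t, f x) (Set.uIcc a3 a4) :=
    continuousOn_primitive_interval' I2 Set.left_mem_uIcc
  have msub : ∀ A B s t : ℝ, A ≤ B → A ≤ s → s ≤ t → t ≤ B →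
      Set.uIcc s t ⊆ Set.uIcc A B := by
    intro A B s t hAB hs hst ht
    rw [Set.uIcc_of_le hst, Set.uIcc_of_le hAB]
    exact Set.Icc_subset_Icc hs ht
  have hIoo12sub : Set.Ioo a1 a2 ⊆ Set.uIcc a1 a2 := by
    rw [Set.uIcc_of_le h12.le]; exact Set.Ioo_subset_Icc_self
  have hTa1 : T a1 = a3 := by
    have h := e3 a1 (ne_of_lt (lt_trans h12 hpa2))
    simp at h
    linarith
  have hTa2 : T a2 = a4 := by
    have h := e4 a2 (ne_of_lt hpa2)
    simp at h
    linarith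
  have mem12 : ∀ x ∈ Set.Ioo a1 a2, x ∈ Set.uIcc a1 a2 := fun x hx => hIoo12sub hx
  have mem34 : ∀ x ∈ Set.Ioo a3 a4, x ∈ Set.uIcc a3 a4 := by
    intro x hx
    rw [Set.uIcc_of_le h34.le]
    exact Set.Ioo_subset_Icc_self hx
  have stepA : ∀ v ∈ Set.Ioo a1 a2, (∫ x in a1..v, f x) = ∫ x in a3..(T v), f x := by
    intro v hv
    have hTv := hTmem v hv
    haveI : (𝓝[Set.Ioo a1 v] a1).NeBot := by
      apply mem_closure_iff_nhdsWithin_neBot.1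
      rw [closure_Ioo hv.1.ne]
      exact Set.left_mem_Icc.2 hv.1.le
    have hIoosub : Set.Ioo a1 v ⊆ Set.Ioo a1 a2 := fun x hx =>
      ⟨hx.1, lt_trans hx.2 hv.2⟩
    have hEq : ∀ᶠ u in 𝓝[Set.Ioo a1 v] a1,
        (∫ x in a1..v, f x) - (∫ x in a1..u, f x) =
        (∫ x in a3..(T v), f x) - (∫ x in a3..(T u), f x) := by
      filter_upwards [self_mem_nhdsWithin] with u hu
      have hu1 : a1 < u := hu.1
      have hu2 : u < a2 := lt_trans hu.2 hv.2
      have hTu := hTmem u ⟨hu1, hu2⟩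
      have s1 : (∫ x in a1..u, f x) + (∫ x in u..v, f x) = ∫ x in a1..v, f x :=
        integral_add_adjacent_intervals
          (I1.mono_set (Set.uIcc_subset_uIcc Set.left_mem_uIcc (mem12 u ⟨hu1, hu2⟩)))
          (I1.mono_set (Set.uIcc_subset_uIcc (mem12 u ⟨hu1, hu2⟩) (mem12 v hv)))
      have s2 : (∫ x in a3..(T u), f x) + (∫ x in (T u)..(T v), f x) =
          ∫ x in a3..(T v), f x :=
        integral_add_adjacent_intervals
          (I2.mono_set (Set.uIcc_subset_uIcc Set.left_mem_uIcc (mem34 _ hTu)))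
          (I2.mono_set (Set.uIcc_subset_uIcc (mem34 _ hTu) (mem34 _ hTv)))
      have s3 := hsubst u v hu1 hu.2.le hv.2
      linarith
    have tPhi : Tendsto (fun u => ∫ x in a1..u, f x) (𝓝[Set.Ioo a1 v] a1) (𝓝 0) := by
      have h := ((hΦ a1 Set.left_mem_uIcc).mono
        (fun x hx => hIoo12sub (hIoosub hx))).tendsto
      simpa [intervalIntegral.integral_same] using h
    have tPsi : Tendsto (fun u => ∫ x in a3..(T u), f x) (𝓝[Set.Ioo a1 v] a1) (𝓝 0) := by
      have hTcwa : ContinuousWithinAt T (Set.Ioo a1 v) a1 :=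
        (hTcontAt a1 (ne_of_lt (lt_trans h12 hpa2))).continuousWithinAt
      have hmaps : Set.MapsTo T (Set.Ioo a1 v) (Set.uIcc a3 a4) := fun x hx =>
        mem34 _ (hTmem x (hIoosub hx))
      have hpsi : ContinuousWithinAt (fun t => ∫ x in a3..t, f x) (Set.uIcc a3 a4) (T a1) := by
        rw [hTa1]; exact hΨ a3 Set.left_mem_uIcc
      have hcomp := (hpsi.comp hTcwa hmaps).tendsto
      simp only [Function.comp_def, hTa1, intervalIntegral.integral_same] at hcomp
      exact hcomp
    have limL : Tendsto (fun u => (∫ x in a1..v, f x) - ∫ x in a1..u, f x)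
        (𝓝[Set.Ioo a1 v] a1) (𝓝 ((∫ x in a1..v, f x) - 0)) := tendsto_const_nhds.sub tPhi
    have limR : Tendsto (fun u => (∫ x in a3..(T v), f x) - ∫ x in a3..(T u), f x)
        (𝓝[Set.Ioo a1 v] a1) (𝓝 ((∫ x in a3..(T v), f x) - 0)) := tendsto_const_nhds.sub tPsi
    have huniq := tendsto_nhds_unique (limL.congr' hEq) limR
    linarith
  -- step B : take v → a2
  haveI : (𝓝[Set.Ioo a1 a2] a2).NeBot := by
    apply mem_closure_iff_nhdsWithin_neBot.1
    rw [closure_Ioo h12.ne]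
    exact Set.right_mem_Icc.2 h12.le
  have hEq2 : ∀ᶠ v in 𝓝[Set.Ioo a1 a2] a2,
      (∫ x in a1..v, f x) = ∫ x in a3..(T v), f x := by
    filter_upwards [self_mem_nhdsWithin] with v hv
    exact stepA v hv
  have tPhi2 : Tendsto (fun v => ∫ x in a1..v, f x) (𝓝[Set.Ioo a1 a2] a2)
      (𝓝 (∫ x in a1..a2, f x)) :=
    ((hΦ a2 Set.right_mem_uIcc).mono hIoo12sub).tendsto
  have tPsi2 : Tendsto (fun v => ∫ x in a3..(T v), f x) (𝓝[Set.Ioo a1 a2] a2)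
      (𝓝 (∫ x in a3..a4, f x)) := by
    have hTcwa : ContinuousWithinAt T (Set.Ioo a1 a2) a2 :=
      (hTcontAt a2 (ne_of_lt hpa2)).continuousWithinAt
    have hmaps : Set.MapsTo T (Set.Ioo a1 a2) (Set.uIcc a3 a4) := fun x hx =>
      mem34 _ (hTmem x hx)
    have hpsi : ContinuousWithinAt (fun t => ∫ x in a3..t, f x) (Set.uIcc a3 a4) (T a2) := by
      rw [hTa2]; exact hΨ a4 Set.right_mem_uIcc
    have hcomp := (hpsi.comp hTcwa hmaps).tendsto
    simp only [Function.comp_def, hTa2] at hcomp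
    exact hcomp
  exact tendsto_nhds_unique (tPhi2.congr' hEq2) tPsi2
end

section
/- Let P be a real polynomial with P(a) = 0 and P'(a) ≠ 0 for some real a, and suppose P < 0 on (a, a+δ] for some δ > 0 (so P'(a) < 0). Then ∫_a^x dt/√(-P(t)) = 2√((a-x)/P'(a)) + O((x-a)^{3/2}) as x → a⁺; precisely there exist C, δ' > 0 such that |∫_a^x dt/√(-P(t)) - 2√((x-a)/(-P'(a)))| ≤ C (x-a)^{3/2} for all x ∈ (a, a+δ']. -/
open Real Polynomial MeasureTheory intervalIntegral

set_option maxHeartbeats 2000000 in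
theorem stmt_13 (P : Polynomial ℝ) (a δ : ℝ) (hδ : 0 < δ)
    (ha : P.eval a = 0) (ha' : P.derivative.eval a ≠ 0)
    (hneg : ∀ x ∈ Set.Ioc a (a + δ), P.eval x < 0) :
    ∃ C δ' : ℝ, 0 < C ∧ 0 < δ' ∧ ∀ x ∈ Set.Ioc a (a + δ'),
      |(∫ t in a..x, 1 / Real.sqrt (-P.eval t)) -
          2 * Real.sqrt ((x - a) / (-P.derivative.eval a))|
        ≤ C * (x - a) ^ ((3 : ℝ) / 2) := by
  obtain ⟨Q, hQ⟩ : (X - C a) ∣ P := Polynomial.dvd_iff_isRoot.mpr ha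
  have hPe : ∀ t, P.eval t = (t - a) * Q.eval t := by intro t; rw [hQ]; simp
  have hder : P.derivative.eval a = Q.eval a := by rw [hQ]; simp [derivative_mul]
  have hQa : Q.eval a < 0 := by
    have htend : Filter.Tendsto (fun t => Q.eval t) (nhdsWithin a (Set.Ioi a)) (nhds (Q.eval a)) :=
      (Q.continuous_aeval.tendsto a).mono_left nhdsWithin_le_nhds
    have hle : Q.eval a ≤ 0 := by
      refine le_of_tendsto htend ?_
      filter_upwards [Ioc_mem_nhdsGT (by linarith : a < a + δ)] with t ht
      have := hneg t ht
      rw [hPe t] at this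
      nlinarith [ht.1, this]
    rcases hle.lt_or_eq with h | h
    · exact h
    · exact absurd (hder.trans h) ha'
  set m : ℝ := -Q.eval a with hm_def
  have hm : 0 < m := by simp only [hm_def]; linarith
  -- linear bound on Q near a
  obtain ⟨R, hR⟩ : (X - C a) ∣ (Q - Polynomial.C (Q.eval a)) :=
    Polynomial.dvd_iff_isRoot.mpr (by simp [Polynomial.IsRoot])
  have hQe : ∀ t, Q.eval t - Q.eval a = (t - a) * R.eval t := by
    intro t
    have := congrArg (Polynomial.eval t) hR
    simpa using this
  obtain ⟨K₀, hK₀⟩ := (isCompact_Icc : IsCompact (Set.Icc a (a + 1))).exists_bound_of_continuousOn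
    ((R.continuous : Continuous fun x => R.eval x).continuousOn)
  set K₁ : ℝ := max K₀ 1 with hK₁_def
  have hK₁ : 0 < K₁ := lt_of_lt_of_le one_pos (le_max_right _ _)
  set δ' : ℝ := min δ (min 1 (m / (2 * K₁))) with hδ'_def
  have hδ' : 0 < δ' := by
    refine lt_min hδ (lt_min one_pos (by positivity))
  -- basic facts on Ioc a (a+δ')
  have hQbound : ∀ t ∈ Set.Ioc a (a + δ'), |Q.eval t + m| ≤ K₁ * (t - a) := by
    intro t ht
    have h1 : a < t := ht.1
    have h2 : t ≤ a + 1 := le_trans ht.2 (by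
      have : δ' ≤ 1 := le_trans (min_le_right _ _) (min_le_left _ _)
      linarith)
    have : Q.eval t + m = (t - a) * R.eval t := by
      have := hQe t; simp only [hm_def]; linarith
    rw [this, abs_mul, abs_of_pos (by linarith : (0:ℝ) < t - a)]
    have hR' : |R.eval t| ≤ K₁ := le_trans (hK₀ t ⟨h1.le, h2⟩) (le_max_left _ _)
    calc (t - a) * |R.eval t| ≤ (t - a) * K₁ := by
          exact mul_le_mul_of_nonneg_left hR' (by linarith)
      _ = K₁ * (t - a) := mul_comm _ _
  have hQhalf : ∀ t ∈ Set.Ioc a (a + δ'), m / 2 ≤ -Q.eval t := by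
    intro t ht
    have hb := hQbound t ht
    have h3 : t - a ≤ m / (2 * K₁) := by
      have : δ' ≤ m / (2 * K₁) := le_trans (min_le_right _ _) (min_le_right _ _)
      have := ht.2; linarith
    have : K₁ * (t - a) ≤ m / 2 := by
      rw [div_mul_eq_div_div] at h3
      calc K₁ * (t - a) ≤ K₁ * (m / 2 / K₁) := by
            exact mul_le_mul_of_nonneg_left h3 hK₁.le
        _ = m / 2 := by field_simp
    have := abs_le.mp hb
    linarith [this.2]
  set K₂ : ℝ := K₁ / (Real.sqrt (m / 2) * Real.sqrt m * (Real.sqrt (m / 2) + Real.sqrt m))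
    with hK₂_def
  have hK₂ : 0 < K₂ := by
    apply div_pos hK₁
    have h1 : 0 < Real.sqrt (m / 2) := Real.sqrt_pos.mpr (by linarith)
    have h2 : 0 < Real.sqrt m := Real.sqrt_pos.mpr hm
    positivity
  -- key pointwise bound
  have key : ∀ t ∈ Set.Ioc a (a + δ'),
      |1 / Real.sqrt (-P.eval t) - 1 / Real.sqrt (m * (t - a))| ≤ K₂ * Real.sqrt (t - a) := by
    intro t ht
    have hs : 0 < t - a := by linarith [ht.1]
    set s : ℝ := t - a with hs_def
    set q : ℝ := -Q.eval t with hq_def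
    have hq2 : m / 2 ≤ q := hQhalf t ht
    have hq0 : 0 < q := by linarith
    have hmq : |m - q| ≤ K₁ * s := by
      have h := hQbound t ht
      have h2 : m - q = Q.eval t + m := by rw [hq_def]; ring
      rw [h2]; exact h
    set ss := Real.sqrt s with hss_def
    set sq := Real.sqrt q with hsq_def
    set sm := Real.sqrt m with hsm_def
    set s2 := Real.sqrt (m / 2) with hs2_def
    have hss0 : 0 < ss := Real.sqrt_pos.mpr hs
    have hsq0 : 0 < sq := Real.sqrt_pos.mpr hq0
    have hsm0 : 0 < sm := Real.sqrt_pos.mpr hm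
    have hs20 : 0 < s2 := Real.sqrt_pos.mpr (by linarith)
    have hs2q : s2 ≤ sq := Real.sqrt_le_sqrt hq2
    have hss2 : ss * ss = s := Real.mul_self_sqrt hs.le
    have hsq2 : sq * sq = q := Real.mul_self_sqrt hq0.le
    have hsm2 : sm * sm = m := Real.mul_self_sqrt hm.le
    have hs22 : s2 * s2 = m / 2 := Real.mul_self_sqrt (by linarith)
    have e1 : Real.sqrt (-P.eval t) = ss * sq := by
      rw [show -P.eval t = s * q by rw [hPe t, hs_def, hq_def]; ring, hss_def, hsq_def,
        ← Real.sqrt_mul hs.le]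
    have e2 : Real.sqrt (m * s) = sm * ss := by
      rw [hsm_def, hss_def, ← Real.sqrt_mul hm.le]
    rw [e1, e2]
    have e3 : 1 / (ss * sq) - 1 / (sm * ss) = (m - q) / (ss * sq * sm * (sm + sq)) := by
      have h4 : m - q = (sm - sq) * (sm + sq) := by nlinarith
      rw [h4]
      field_simp
    rw [e3, abs_div, abs_of_pos (by positivity : (0:ℝ) < ss * sq * sm * (sm + sq))]
    have step1 : |m - q| / (ss * sq * sm * (sm + sq)) ≤ (K₁ * s) / (ss * s2 * sm * (s2 + sm)) := by
      apply div_le_div₀ (by positivity) hmq (by positivity)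
      calc ss * s2 * sm * (s2 + sm) ≤ ss * sq * sm * (s2 + sm) := by
            apply mul_le_mul_of_nonneg_right _ (by positivity)
            apply mul_le_mul_of_nonneg_right _ hsm0.le
            exact mul_le_mul_of_nonneg_left hs2q hss0.le
        _ ≤ ss * sq * sm * (sm + sq) := by
            apply mul_le_mul_of_nonneg_left (by linarith) (by positivity)
    have step2 : (K₁ * s) / (ss * s2 * sm * (s2 + sm)) = K₂ * ss := by
      rw [hK₂_def, ← hss2]
      field_simp
    calc |m - q| / (ss * sq * sm * (sm + sq))
        ≤ (K₁ * s) / (ss * s2 * sm * (s2 + sm)) := step1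
      _ = K₂ * ss := step2
  refine ⟨K₂ * (2 / 3) + 1, δ', by positivity, hδ', ?_⟩
  intro x hx
  have hax : a < x := hx.1
  rw [show -P.derivative.eval a = m by rw [hder, hm_def]]
  set f : ℝ → ℝ := fun t => 1 / Real.sqrt (-P.eval t) with hf_def
  set g : ℝ → ℝ := fun t => 1 / Real.sqrt (m * (t - a)) with hg_def
  have hsub : Set.Ioc a x ⊆ Set.Ioc a (a + δ') := Set.Ioc_subset_Ioc le_rfl hx.2
  have hrpow_int : IntervalIntegrable (fun t : ℝ => (t - a) ^ (-(1 / 2) : ℝ)) volume a x := by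
    have h := (intervalIntegrable_rpow' (a := 0) (b := x - a)
      (by norm_num : (-1 : ℝ) < -(1 / 2))).comp_sub_right a
    simpa using h
  have hg_eq : Set.EqOn g (fun t => (Real.sqrt m)⁻¹ * (t - a) ^ (-(1 / 2) : ℝ))
      (Set.uIcc a x) := by
    intro t ht
    rw [Set.uIcc_of_le hax.le] at ht
    have h0 : 0 ≤ t - a := by linarith [ht.1]
    simp only [hg_def]
    rw [Real.sqrt_mul hm.le, Real.rpow_neg h0, ← Real.sqrt_eq_rpow, one_div, mul_inv]
  have hg_int : IntervalIntegrable g volume a x := by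
    rw [intervalIntegrable_iff_integrableOn_Ioc_of_le hax.le]
    have h1 : MeasureTheory.IntegrableOn
        (fun t => (Real.sqrt m)⁻¹ * (t - a) ^ (-(1 / 2) : ℝ)) (Set.Ioc a x) volume := by
      rw [← intervalIntegrable_iff_integrableOn_Ioc_of_le hax.le]
      exact hrpow_int.const_mul _
    exact h1.congr_fun (fun t ht => (hg_eq (by
      rw [Set.uIcc_of_le hax.le]; exact Set.Ioc_subset_Icc_self ht)).symm) measurableSet_Ioc
  have hg_val : (∫ t in a..x, g t) = 2 * Real.sqrt ((x - a) / m) := by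
    rw [intervalIntegral.integral_congr hg_eq, intervalIntegral.integral_const_mul,
      intervalIntegral.integral_comp_sub_right (fun u => u ^ (-(1 / 2) : ℝ)) a,
      integral_rpow (Or.inl (by norm_num)), Real.sqrt_div (by linarith : (0:ℝ) ≤ x - a),
      Real.sqrt_eq_rpow]
    rw [show a - a = (0:ℝ) by ring, Real.zero_rpow (by norm_num : (-(1/2) : ℝ) + 1 ≠ 0)]
    rw [show (-(1/2) : ℝ) + 1 = 1/2 by norm_num]
    field_simp
    rw [Real.sqrt_eq_rpow]
    ring
  have hb_int : IntervalIntegrable (fun t => K₂ * Real.sqrt (t - a)) volume a x :=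
    Continuous.intervalIntegrable (by continuity) a x
  have hb_val : (∫ t in a..x, K₂ * Real.sqrt (t - a))
      = K₂ * ((2 / 3) * (x - a) ^ ((3:ℝ) / 2)) := by
    rw [intervalIntegral.integral_const_mul]
    have heq : Set.EqOn (fun t : ℝ => Real.sqrt (t - a)) (fun t => (t - a) ^ ((1:ℝ) / 2))
        (Set.uIcc a x) := fun t _ => Real.sqrt_eq_rpow _
    rw [intervalIntegral.integral_congr heq,
      intervalIntegral.integral_comp_sub_right (fun u => u ^ ((1:ℝ) / 2)) a,
      integral_rpow (Or.inl (by norm_num))]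
    rw [show a - a = (0:ℝ) by ring, Real.zero_rpow (by norm_num : ((1:ℝ)/2) + 1 ≠ 0)]
    rw [show ((1:ℝ)/2) + 1 = 3/2 by norm_num]
    ring
  have hf_meas : MeasureTheory.AEStronglyMeasurable f (volume.restrict (Set.Ioc a x)) := by
    apply Measurable.aestronglyMeasurable
    exact measurable_const.div
      ((Real.continuous_sqrt.comp (P.continuous.neg)).measurable)
  have hg_meas : MeasureTheory.AEStronglyMeasurable g (volume.restrict (Set.Ioc a x)) := by
    apply Measurable.aestronglyMeasurable
    exact measurable_const.div
      ((Real.continuous_sqrt.comp ((continuous_const.mul (continuous_id.sub continuous_const)))).measurable)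
  have hbon : MeasureTheory.IntegrableOn (fun t => K₂ * Real.sqrt (t - a)) (Set.Ioc a x) volume :=
    (intervalIntegrable_iff_integrableOn_Ioc_of_le hax.le).mp hb_int
  have hfg_on : MeasureTheory.IntegrableOn (fun t => f t - g t) (Set.Ioc a x) volume := by
    apply MeasureTheory.Integrable.mono' hbon (hf_meas.sub hg_meas)
    refine (MeasureTheory.ae_restrict_iff' measurableSet_Ioc).mpr (Filter.Eventually.of_forall ?_)
    intro t ht
    have := key t (hsub ht)
    simpa [Real.norm_eq_abs, hf_def, hg_def] using this
  have hf_int : IntervalIntegrable f volume a x := by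
    rw [intervalIntegrable_iff_integrableOn_Ioc_of_le hax.le]
    have hgon : MeasureTheory.IntegrableOn g (Set.Ioc a x) volume :=
      (intervalIntegrable_iff_integrableOn_Ioc_of_le hax.le).mp hg_int
    have h2 : (fun t => (f t - g t) + g t) = f := by funext t; ring
    rw [← h2]
    exact hfg_on.add hgon
  have hfg_int : IntervalIntegrable (fun t => f t - g t) volume a x := by
    rw [intervalIntegrable_iff_integrableOn_Ioc_of_le hax.le]; exact hfg_on
  have hdiff : (∫ t in a..x, f t) - 2 * Real.sqrt ((x - a) / m)
      = ∫ t in a..x, (f t - g t) := by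
    rw [intervalIntegral.integral_sub hf_int hg_int, hg_val]
  have hX : (0:ℝ) ≤ (x - a) ^ ((3:ℝ) / 2) := Real.rpow_nonneg (by linarith) _
  calc |(∫ t in a..x, f t) - 2 * Real.sqrt ((x - a) / m)|
      = |∫ t in a..x, (f t - g t)| := by rw [hdiff]
    _ ≤ |∫ t in a..x, K₂ * Real.sqrt (t - a)| := by
        rw [← Real.norm_eq_abs]
        apply intervalIntegral.norm_integral_le_abs_of_norm_le _ hb_int
        refine (MeasureTheory.ae_restrict_iff' measurableSet_uIoc).mpr
          (Filter.Eventually.of_forall ?_)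
        intro t ht
        rw [Set.uIoc_of_le hax.le] at ht
        have := key t (hsub ht)
        simpa [Real.norm_eq_abs, hf_def, hg_def] using this
    _ = K₂ * ((2 / 3) * (x - a) ^ ((3:ℝ) / 2)) := by
        rw [hb_val, abs_of_nonneg (by positivity)]
    _ ≤ (K₂ * (2 / 3) + 1) * (x - a) ^ ((3:ℝ) / 2) := by nlinarith [hX, hK₂.le]
end
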